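/- (e-cutoff, positive direction) For any Borel probability measure μ on [0,1] and any 0 < λ < e, the map T_λ(F) = exp(−λ Φ_μ(F)) on 𝓓 (nondecreasing functions [0,1] → [0,1]) has a unique fixed point which is a global attractor in the sup norm: there is F* ∈ 𝓓 with T_λ(F*) = F* and T_λⁿ(F) → F* uniformly for every F ∈ 𝓓. -/

import Mathlib

open MeasureTheory Filter Set Topology


lemma aux_texp {s : ℝ} (hs : 0 ≤ s) : s * Real.exp (-s) ≤ Real.exp (-1) := by
  have h := Real.add_one_le_exp (s - 1)
  have hs' : s ≤ Real.exp (s - 1) := by linarith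
  calc s * Real.exp (-s) ≤ Real.exp (s - 1) * Real.exp (-s) :=
        mul_le_mul_of_nonneg_right hs' (Real.exp_pos _).le
    _ = Real.exp (-1) := by rw [← Real.exp_add]; ring_nf

lemma aux_one_sub_exp (t : ℝ) : 1 - Real.exp (-t) ≤ t := by
  have := Real.add_one_le_exp (-t); linarith

lemma aux_exp_lip {lam a b : ℝ} (hl : 0 < lam) (ha : 0 ≤ a) (hb : 0 ≤ b) :
    |Real.exp (-(lam * a)) - Real.exp (-(lam * b))| ≤ lam * |a - b| := by
  wlog hab : a ≤ b generalizing a b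
  · rw [abs_sub_comm, abs_sub_comm a b]; exact this hb ha (le_of_not_ge hab)
  have h1 : Real.exp (-(lam * b)) ≤ Real.exp (-(lam * a)) := by
    apply Real.exp_le_exp.2; nlinarith
  rw [abs_of_nonneg (by linarith), abs_of_nonpos (by linarith)]
  have key : Real.exp (-(lam * a)) - Real.exp (-(lam * b))
      = Real.exp (-(lam * a)) * (1 - Real.exp (-(lam * (b - a)))) := by
    rw [mul_sub, mul_one, ← Real.exp_add]; ring_nf
  rw [key]
  have h2 : 1 - Real.exp (-(lam * (b - a))) ≤ lam * (b - a) := aux_one_sub_exp _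
  have h3 : Real.exp (-(lam * a)) ≤ 1 := Real.exp_le_one_iff.2 (by nlinarith)
  have h4 : 0 ≤ 1 - Real.exp (-(lam * (b - a))) := by
    have : Real.exp (-(lam * (b - a))) ≤ 1 := Real.exp_le_one_iff.2 (by nlinarith)
    linarith
  calc Real.exp (-(lam * a)) * (1 - Real.exp (-(lam * (b - a))))
      ≤ 1 * (lam * (b - a)) := mul_le_mul h3 h2 h4 zero_le_one
    _ = lam * -(a - b) := by ring

lemma keyB {lam η : ℝ} (hl : 0 < lam) (hη : 0 ≤ η) {ν : Measure ℝ} [IsFiniteMeasure ν]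
    {u v : ℝ → ℝ}
    (hui : Integrable (fun z => Real.exp (-(lam * u z))) ν)
    (hvi : Integrable (fun z => Real.exp (-(lam * v z))) ν)
    (hu0 : ∀ᵐ z ∂ν, 0 ≤ u z) (hv0 : ∀ᵐ z ∂ν, 0 ≤ v z)
    (huv : ∀ᵐ z ∂ν, |u z - v z| ≤ η) :
    |Real.exp (-(lam * ∫ z, Real.exp (-(lam * u z)) ∂ν)) -
     Real.exp (-(lam * ∫ z, Real.exp (-(lam * v z)) ∂ν))|
      ≤ (Real.exp (lam * η) - 1) * Real.exp (-1) := by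
  set P := ∫ z, Real.exp (-(lam * u z)) ∂ν with hP
  set Q := ∫ z, Real.exp (-(lam * v z)) ∂ν with hQ
  have hP0 : 0 ≤ P := integral_nonneg fun z => (Real.exp_pos _).le
  have hQ0 : 0 ≤ Q := integral_nonneg fun z => (Real.exp_pos _).le
  have hPQ : P ≤ Real.exp (lam * η) * Q := by
    have : P ≤ ∫ z, Real.exp (lam * η) * Real.exp (-(lam * v z)) ∂ν := by
      refine integral_mono_ae hui (hvi.const_mul _) ?_
      filter_upwards [hu0, hv0, huv] with z h1 h2 h3
      rw [← Real.exp_add]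
      apply Real.exp_le_exp.2
      have : v z - u z ≤ η := by cases' abs_le.1 h3 with hA hB; linarith
      nlinarith
    rwa [integral_const_mul] at this
  have hQP : Q ≤ Real.exp (lam * η) * P := by
    have : Q ≤ ∫ z, Real.exp (lam * η) * Real.exp (-(lam * u z)) ∂ν := by
      refine integral_mono_ae hvi (hui.const_mul _) ?_
      filter_upwards [hu0, hv0, huv] with z h1 h2 h3
      rw [← Real.exp_add]
      apply Real.exp_le_exp.2
      have : u z - v z ≤ η := by cases' abs_le.1 h3 with hA hB; linarith
      nlinarith
    rwa [integral_const_mul] at this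
  have hRHS0 : (0:ℝ) ≤ (Real.exp (lam * η) - 1) * Real.exp (-1) := by
    have : (1:ℝ) ≤ Real.exp (lam * η) := Real.one_le_exp (by positivity)
    have := (Real.exp_pos (-1)).le
    nlinarith
  have step : ∀ P' Q' : ℝ, 0 ≤ P' → 0 ≤ Q' → P' ≤ Real.exp (lam * η) * Q' →
      Real.exp (-(lam * Q')) - Real.exp (-(lam * P')) ≤ (Real.exp (lam * η) - 1) * Real.exp (-1) := by
    intro P' Q' hP' hQ' hPQ'
    rcases le_or_gt P' Q' with h | h
    · have : Real.exp (-(lam * Q')) ≤ Real.exp (-(lam * P')) := by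
        apply Real.exp_le_exp.2; nlinarith
      linarith
    · have key : Real.exp (-(lam * Q')) - Real.exp (-(lam * P'))
          = Real.exp (-(lam * Q')) * (1 - Real.exp (-(lam * (P' - Q')))) := by
        rw [mul_sub, mul_one, ← Real.exp_add]; ring_nf
      rw [key]
      have h2 : 1 - Real.exp (-(lam * (P' - Q'))) ≤ lam * (P' - Q') := aux_one_sub_exp _
      have h4 : 0 ≤ 1 - Real.exp (-(lam * (P' - Q'))) := by
        have : Real.exp (-(lam * (P' - Q'))) ≤ 1 := Real.exp_le_one_iff.2 (by nlinarith)
        linarith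
      have h5 : P' - Q' ≤ (Real.exp (lam * η) - 1) * Q' := by nlinarith
      have h6 : Real.exp (-(lam * Q')) * (1 - Real.exp (-(lam * (P' - Q'))))
          ≤ Real.exp (-(lam * Q')) * (lam * ((Real.exp (lam * η) - 1) * Q')) := by
        apply mul_le_mul_of_nonneg_left _ (Real.exp_pos _).le
        calc 1 - Real.exp (-(lam * (P' - Q'))) ≤ lam * (P' - Q') := h2
          _ ≤ lam * ((Real.exp (lam * η) - 1) * Q') := by
              apply mul_le_mul_of_nonneg_left h5 hl.le
      refine h6.trans ?_
      have h7 : (lam * Q') * Real.exp (-(lam * Q')) ≤ Real.exp (-1) :=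
        aux_texp (by positivity)
      have h8 : (0:ℝ) ≤ Real.exp (lam * η) - 1 := by
        have : (1:ℝ) ≤ Real.exp (lam * η) := Real.one_le_exp (by positivity)
        linarith
      calc Real.exp (-(lam * Q')) * (lam * ((Real.exp (lam * η) - 1) * Q'))
          = (Real.exp (lam * η) - 1) * ((lam * Q') * Real.exp (-(lam * Q'))) := by ring
        _ ≤ (Real.exp (lam * η) - 1) * Real.exp (-1) :=
            mul_le_mul_of_nonneg_left h7 h8
  rw [abs_sub_le_iff]
  exact ⟨step Q P hQ0 hP0 hQP, step P Q hP0 hQ0 hPQ⟩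

lemma aux_exp_sub_one (x : ℝ) : Real.exp x - 1 ≤ x * Real.exp x := by
  have h1 := aux_one_sub_exp x
  have h2 : Real.exp (-x) * Real.exp x = 1 := by rw [← Real.exp_add]; simp
  nlinarith [Real.exp_pos x]

lemma keyA {lam δ : ℝ} (hl : 0 < lam) (hδ : 0 ≤ δ) {ν : Measure ℝ} [IsFiniteMeasure ν]
    {u v : ℝ → ℝ}
    (hum : AEStronglyMeasurable u ν) (hvm : AEStronglyMeasurable v ν)
    (hu0 : ∀ᵐ z ∂ν, 0 ≤ u z) (hv0 : ∀ᵐ z ∂ν, 0 ≤ v z)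
    (huv : ∀ᵐ z ∂ν, |u z - v z| ≤ δ) :
    |Real.exp (-(lam * ∫ z, Real.exp (-(lam * u z)) ∂ν)) -
     Real.exp (-(lam * ∫ z, Real.exp (-(lam * v z)) ∂ν))|
      ≤ lam * δ * Real.exp (-1) := by
  set c : ℝ → ℝ → ℝ := fun t z => u z + t * (v z - u z) with hc
  have hcm : ∀ t : ℝ, AEStronglyMeasurable (fun z => Real.exp (-(lam * c t z))) ν := by
    intro t
    have h : AEStronglyMeasurable (c t) ν := hum.add ((hvm.sub hum).const_mul t)
    exact Real.continuous_exp.comp_aestronglyMeasurable ((h.const_mul lam).neg)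
  have hc0 : ∀ t : ℝ, 0 ≤ t → t ≤ 1 → ∀ᵐ z ∂ν, 0 ≤ c t z := by
    intro t ht0 ht1
    filter_upwards [hu0, hv0] with z h1 h2
    have he : c t z = (1 - t) * u z + t * v z := by simp only [hc]; ring
    rw [he]
    have : 0 ≤ (1 - t) * u z := mul_nonneg (by linarith) h1
    have : 0 ≤ t * v z := mul_nonneg ht0 h2
    linarith
  have hci : ∀ t : ℝ, 0 ≤ t → t ≤ 1 → Integrable (fun z => Real.exp (-(lam * c t z))) ν := by
    intro t ht0 ht1
    refine Integrable.mono' (integrable_const 1) (hcm t) ?_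
    filter_upwards [hc0 t ht0 ht1] with z hz
    rw [Real.norm_eq_abs, abs_of_pos (Real.exp_pos _)]
    exact Real.exp_le_one_iff.2 (by nlinarith)
  have main : ∀ n : ℕ, 0 < n →
      |Real.exp (-(lam * ∫ z, Real.exp (-(lam * u z)) ∂ν)) -
       Real.exp (-(lam * ∫ z, Real.exp (-(lam * v z)) ∂ν))|
      ≤ lam * δ * Real.exp (lam * δ / n) * Real.exp (-1) := by
    intro n hn
    have hn' : (0:ℝ) < n := by exact_mod_cast hn
    have hne : (n:ℝ) ≠ 0 := hn'.ne'
    set g : ℕ → ℝ :=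
      fun k => Real.exp (-(lam * ∫ z, Real.exp (-(lam * c ((k : ℝ)/(n : ℝ)) z)) ∂ν)) with hg
    have hstep : ∀ k ∈ Finset.range n,
        |g (k+1) - g k| ≤ (Real.exp (lam * (δ / n)) - 1) * Real.exp (-1) := by
      intro k hk
      have hk' : (k : ℝ) + 1 ≤ n := by exact_mod_cast Nat.succ_le_of_lt (Finset.mem_range.1 hk)
      have h01 : (0:ℝ) ≤ (k:ℝ)/n := by positivity
      have h11 : ((k:ℝ))/n ≤ 1 := by rw [div_le_one hn']; linarith
      have h02 : (0:ℝ) ≤ ((k:ℝ)+1)/n := by positivity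
      have h12 : ((k:ℝ)+1)/n ≤ 1 := by rw [div_le_one hn']; linarith
      have hclose : ∀ᵐ z ∂ν, |c (((k:ℝ)+1)/n) z - c ((k:ℝ)/n) z| ≤ δ / n := by
        filter_upwards [huv] with z hz
        have he : c (((k:ℝ)+1)/n) z - c ((k:ℝ)/n) z = (v z - u z) / n := by
          simp only [hc]; field_simp; ring
        rw [he, abs_div, abs_of_pos hn']
        have : |v z - u z| ≤ δ := by rw [abs_sub_comm]; exact hz
        gcongr
      have hB := keyB hl (by positivity : (0:ℝ) ≤ δ / n)
        (hci _ h02 h12) (hci _ h01 h11) (hc0 _ h02 h12) (hc0 _ h01 h11) hclose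
      have hcast : ((k+1 : ℕ) : ℝ) = (k : ℝ) + 1 := by push_cast; ring
      simp only [hg, hcast]
      exact hB
    have tel : g n - g 0 = ∑ k ∈ Finset.range n, (g (k+1) - g k) := (Finset.sum_range_sub g n).symm
    have h1 : |g n - g 0| ≤ (n : ℝ) * ((Real.exp (lam * (δ/n)) - 1) * Real.exp (-1)) := by
      rw [tel]
      calc |∑ k ∈ Finset.range n, (g (k+1) - g k)|
          ≤ ∑ k ∈ Finset.range n, |g (k+1) - g k| := Finset.abs_sum_le_sum_abs _ _
        _ ≤ ∑ _k ∈ Finset.range n, (Real.exp (lam * (δ/n)) - 1) * Real.exp (-1) :=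
            Finset.sum_le_sum hstep
        _ = (n : ℝ) * ((Real.exp (lam * (δ/n)) - 1) * Real.exp (-1)) := by
            rw [Finset.sum_const, Finset.card_range, nsmul_eq_mul]
    have hg0 : g 0 = Real.exp (-(lam * ∫ z, Real.exp (-(lam * u z)) ∂ν)) := by
      have hz : ∀ z, c (((0:ℕ) : ℝ)/(n:ℝ)) z = u z := by
        intro z; simp [hc]
      simp only [hg, hz]
    have hgn : g n = Real.exp (-(lam * ∫ z, Real.exp (-(lam * v z)) ∂ν)) := by
      have hz : ∀ z, c (((n:ℕ) : ℝ)/(n:ℝ)) z = v z := by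
        intro z; simp only [hc]; rw [div_self hne]; ring
      simp only [hg, hz]
    have h2 : Real.exp (lam * (δ/n)) - 1 ≤ lam * (δ/n) * Real.exp (lam * (δ/n)) := by
      have := aux_exp_sub_one (lam * (δ/n))
      linarith
    calc |Real.exp (-(lam * ∫ z, Real.exp (-(lam * u z)) ∂ν)) -
        Real.exp (-(lam * ∫ z, Real.exp (-(lam * v z)) ∂ν))|
        = |g n - g 0| := by rw [hg0, hgn, abs_sub_comm]
      _ ≤ (n : ℝ) * ((Real.exp (lam * (δ/n)) - 1) * Real.exp (-1)) := h1
      _ ≤ (n : ℝ) * ((lam * (δ/n) * Real.exp (lam * (δ/n))) * Real.exp (-1)) := by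
          have hx : 0 ≤ Real.exp (-1) := (Real.exp_pos _).le
          apply mul_le_mul_of_nonneg_left _ hn'.le
          exact mul_le_mul_of_nonneg_right h2 hx
      _ = lam * δ * Real.exp (lam * δ / n) * Real.exp (-1) := by
          field_simp
  have hlim : Tendsto (fun n : ℕ => lam * δ * Real.exp (lam * δ / n) * Real.exp (-1)) atTop
      (𝓝 (lam * δ * Real.exp 0 * Real.exp (-1))) := by
    apply Tendsto.mul_const
    apply Tendsto.const_mul
    exact (Real.continuous_exp.tendsto 0).comp (tendsto_const_div_atTop_nhds_zero_nat (lam * δ))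
  rw [Real.exp_zero, mul_one] at hlim
  refine ge_of_tendsto hlim ?_
  filter_upwards [eventually_gt_atTop 0] with n hn using main n hn

noncomputable def Tm (μ : Measure ℝ) (lam : ℝ) : (ℝ → ℝ) → (ℝ → ℝ) :=
  fun F x => Real.exp (-(lam * ∫ z in Set.Icc x 1, F (z - x) ∂μ))

def memD (F : ℝ → ℝ) : Prop :=
  MonotoneOn F (Set.Icc 0 1) ∧ ∀ x ∈ Set.Icc (0:ℝ) 1, F x ∈ Set.Icc (0:ℝ) 1

section meas
variable {μ : Measure ℝ} [IsProbabilityMeasure μ] {lam : ℝ}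

lemma memD.integrable {F : ℝ → ℝ} (hF : memD F) {x : ℝ} (hx : x ∈ Set.Icc (0:ℝ) 1)
    (μ : Measure ℝ) [IsProbabilityMeasure μ] :
    IntegrableOn (fun z => F (z - x)) (Set.Icc x 1) μ := by
  set G : ℝ → ℝ := fun t => F (max 0 (min t 1)) with hG
  have hmem : ∀ t : ℝ, max 0 (min t 1) ∈ Set.Icc (0:ℝ) 1 :=
    fun t => ⟨le_max_left _ _, max_le zero_le_one (min_le_right _ _)⟩
  have hGmono : Monotone G := fun s t hst =>
    hF.1 (hmem s) (hmem t) (max_le_max le_rfl (min_le_min hst le_rfl))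
  have hInt : IntegrableOn (fun z => G (z - x)) (Set.Icc x 1) μ := by
    refine Integrable.mono' ((integrable_const (1:ℝ)).restrict (s := Set.Icc x 1))
      ((hGmono.measurable.comp (measurable_id.sub measurable_const)).aestronglyMeasurable) ?_
    filter_upwards with z
    rw [Real.norm_eq_abs, abs_le]
    have h := hF.2 _ (hmem (z - x))
    exact ⟨by linarith [h.1], h.2⟩
  refine hInt.congr_fun ?_ measurableSet_Icc
  intro z hz
  have h1 : 0 ≤ z - x := by linarith [hz.1]
  have h2 : z - x ≤ 1 := by linarith [hz.2, hx.1]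
  simp only [hG, min_eq_left h2, max_eq_right h1]

lemma phi_mem {F : ℝ → ℝ} (hF : memD F) {x : ℝ} (hx : x ∈ Set.Icc (0:ℝ) 1) :
    (∫ z in Set.Icc x 1, F (z - x) ∂μ) ∈ Set.Icc (0:ℝ) 1 := by
  have hsub : ∀ z ∈ Set.Icc x 1, z - x ∈ Set.Icc (0:ℝ) 1 := by
    intro z hz
    exact ⟨by linarith [hz.1], by linarith [hz.2, hx.1]⟩
  constructor
  · exact setIntegral_nonneg measurableSet_Icc fun z hz => (hF.2 _ (hsub z hz)).1
  · calc (∫ z in Set.Icc x 1, F (z - x) ∂μ)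
        ≤ ∫ _z in Set.Icc x 1, (1:ℝ) ∂μ := by
          refine setIntegral_mono_on (hF.integrable hx μ)
            ((integrable_const (1:ℝ)).restrict (s := Set.Icc x 1)) measurableSet_Icc ?_
          exact fun z hz => (hF.2 _ (hsub z hz)).2
      _ = (μ (Set.Icc x 1)).toReal := by rw [setIntegral_const, smul_eq_mul, mul_one]; rfl
      _ ≤ (μ Set.univ).toReal :=
          ENNReal.toReal_mono (measure_ne_top μ _) (measure_mono (subset_univ _))
      _ = 1 := by simp

lemma memD.T (h0 : 0 < lam) {F : ℝ → ℝ} (hF : memD F) : memD (Tm μ lam F) := by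
  constructor
  · intro x hx y hy hxy
    have h1 : (∫ z in Set.Icc y 1, F (z - y) ∂μ) ≤ ∫ z in Set.Icc y 1, F (z - x) ∂μ := by
      refine setIntegral_mono_on (hF.integrable hy μ)
        ((hF.integrable hx μ).mono_set (Set.Icc_subset_Icc_left hxy)) measurableSet_Icc ?_
      intro z hz
      exact hF.1 ⟨by linarith [hz.1], by linarith [hz.2, hy.1]⟩
        ⟨by linarith [hz.1], by linarith [hz.2, hx.1]⟩ (by linarith)
    have h2 : (∫ z in Set.Icc y 1, F (z - x) ∂μ) ≤ ∫ z in Set.Icc x 1, F (z - x) ∂μ := by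
      refine setIntegral_mono_set (hF.integrable hx μ) ?_
        (HasSubset.Subset.eventuallyLE (Set.Icc_subset_Icc_left hxy))
      filter_upwards [ae_restrict_mem measurableSet_Icc] with z hz
      exact (hF.2 _ ⟨by linarith [hz.1], by linarith [hz.2, hx.1]⟩).1
    unfold Tm
    apply Real.exp_le_exp.2
    have := h1.trans h2
    nlinarith
  · intro x hx
    have h := phi_mem (μ := μ) hF hx
    constructor
    · exact (Real.exp_pos _).le
    · apply Real.exp_le_one_iff.2
      nlinarith [h.1]

lemma Tm_congr {F G : ℝ → ℝ} (h : Set.EqOn F G (Set.Icc 0 1)) {x : ℝ}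
    (hx : x ∈ Set.Icc (0:ℝ) 1) : Tm μ lam F x = Tm μ lam G x := by
  have heq : (∫ z in Set.Icc x 1, F (z - x) ∂μ) = ∫ z in Set.Icc x 1, G (z - x) ∂μ :=
    setIntegral_congr_fun measurableSet_Icc fun z hz =>
      h ⟨by linarith [hz.1], by linarith [hz.2, hx.1]⟩
  simp only [Tm, heq]

lemma phi_close {F G : ℝ → ℝ} (hF : memD F) (hG : memD G) {δ : ℝ}
    (h : ∀ u ∈ Set.Icc (0:ℝ) 1, |F u - G u| ≤ δ) {x : ℝ} (hx : x ∈ Set.Icc (0:ℝ) 1) :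
    |(∫ z in Set.Icc x 1, F (z - x) ∂μ) - ∫ z in Set.Icc x 1, G (z - x) ∂μ| ≤ δ := by
  have hδ : 0 ≤ δ := le_trans (abs_nonneg _) (h 0 ⟨le_rfl, zero_le_one⟩)
  rw [← integral_sub (hF.integrable hx μ) (hG.integrable hx μ)]
  calc |∫ z in Set.Icc x 1, (F (z - x) - G (z - x)) ∂μ|
      ≤ ∫ z in Set.Icc x 1, |F (z - x) - G (z - x)| ∂μ := by
        simpa [Real.norm_eq_abs] using
          norm_integral_le_integral_norm (μ := μ.restrict (Set.Icc x 1))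
            (fun z => F (z - x) - G (z - x))
    _ ≤ ∫ _z in Set.Icc x 1, δ ∂μ := by
        refine setIntegral_mono_on (((hF.integrable hx μ).sub (hG.integrable hx μ)).abs)
          ((integrable_const δ).restrict (s := Set.Icc x 1)) measurableSet_Icc ?_
        intro z hz
        exact h _ ⟨by linarith [hz.1], by linarith [hz.2, hx.1]⟩
    _ = (μ (Set.Icc x 1)).toReal * δ := by rw [setIntegral_const, smul_eq_mul]; rfl
    _ ≤ 1 * δ := by
        refine mul_le_mul_of_nonneg_right ?_ hδ
        calc (μ (Set.Icc x 1)).toReal ≤ (μ Set.univ).toReal :=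
            ENNReal.toReal_mono (measure_ne_top μ _) (measure_mono (subset_univ _))
          _ = 1 := by simp
    _ = δ := one_mul δ

end meas

section main
variable {μ : Measure ℝ} [IsProbabilityMeasure μ] {lam : ℝ}

lemma T_lip (h0 : 0 < lam) {F G : ℝ → ℝ} (hF : memD F) (hG : memD G) {δ : ℝ}
    (h : ∀ u ∈ Set.Icc (0:ℝ) 1, |F u - G u| ≤ δ) {x : ℝ} (hx : x ∈ Set.Icc (0:ℝ) 1) :
    |Tm μ lam F x - Tm μ lam G x| ≤ lam * δ := by
  have h1 := aux_exp_lip h0 (phi_mem (μ := μ) hF hx).1 (phi_mem (μ := μ) hG hx).1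
  refine le_trans ?_ (h1.trans (mul_le_mul_of_nonneg_left (phi_close hF hG h hx) h0.le))
  simp only [Tm]
  exact le_rfl

lemma T2_contract (h0 : 0 < lam) {F G : ℝ → ℝ} (hF : memD F) (hG : memD G) {δ : ℝ} (hδ : 0 ≤ δ)
    (h : ∀ u ∈ Set.Icc (0:ℝ) 1, |F u - G u| ≤ δ) {x : ℝ} (hx : x ∈ Set.Icc (0:ℝ) 1) :
    |Tm μ lam (Tm μ lam F) x - Tm μ lam (Tm μ lam G) x| ≤ lam * δ * Real.exp (-1) := by
  set ν := μ.restrict (Set.Icc x 1) with hν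
  haveI : IsFiniteMeasure ν := ⟨by rw [hν, Measure.restrict_apply_univ]; exact measure_lt_top μ _⟩
  set u : ℝ → ℝ := fun z => ∫ w in Set.Icc (z - x) 1, F (w - (z - x)) ∂μ with hu
  set v : ℝ → ℝ := fun z => ∫ w in Set.Icc (z - x) 1, G (w - (z - x)) ∂μ with hv
  have hTF : ∀ z, Tm μ lam F (z - x) = Real.exp (-(lam * u z)) := fun z => rfl
  have hTG : ∀ z, Tm μ lam G (z - x) = Real.exp (-(lam * v z)) := fun z => rfl
  have hsub : ∀ z ∈ Set.Icc x 1, z - x ∈ Set.Icc (0:ℝ) 1 := fun z hz =>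
    ⟨by linarith [hz.1], by linarith [hz.2, hx.1]⟩
  have hTFmem : memD (Tm μ lam F) := hF.T h0
  have hTGmem : memD (Tm μ lam G) := hG.T h0
  have hlamne : lam ≠ 0 := h0.ne'
  have hum : AEStronglyMeasurable u ν := by
    have h1 : AEStronglyMeasurable (fun z => Tm μ lam F (z - x)) ν :=
      (hTFmem.integrable hx μ).aestronglyMeasurable
    have h2 : AEStronglyMeasurable (fun z => -(1/lam) * Real.log (Tm μ lam F (z - x))) ν :=
      ((Real.measurable_log.comp_aemeasurable h1.aemeasurable).aestronglyMeasurable).const_mul _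
    refine h2.congr (ae_of_all _ fun z => ?_)
    simp only []
    rw [hTF z, Real.log_exp]
    field_simp
  have hvm : AEStronglyMeasurable v ν := by
    have h1 : AEStronglyMeasurable (fun z => Tm μ lam G (z - x)) ν :=
      (hTGmem.integrable hx μ).aestronglyMeasurable
    have h2 : AEStronglyMeasurable (fun z => -(1/lam) * Real.log (Tm μ lam G (z - x))) ν :=
      ((Real.measurable_log.comp_aemeasurable h1.aemeasurable).aestronglyMeasurable).const_mul _
    refine h2.congr (ae_of_all _ fun z => ?_)
    simp only []
    rw [hTG z, Real.log_exp]
    field_simp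
  have hu0 : ∀ᵐ z ∂ν, 0 ≤ u z := by
    filter_upwards [ae_restrict_mem measurableSet_Icc] with z hz
    exact (phi_mem hF (hsub z hz)).1
  have hv0 : ∀ᵐ z ∂ν, 0 ≤ v z := by
    filter_upwards [ae_restrict_mem measurableSet_Icc] with z hz
    exact (phi_mem hG (hsub z hz)).1
  have huv : ∀ᵐ z ∂ν, |u z - v z| ≤ δ := by
    filter_upwards [ae_restrict_mem measurableSet_Icc] with z hz
    exact phi_close hF hG h (hsub z hz)
  exact keyA h0 hδ hum hvm hu0 hv0 huv

lemma iter_memD (h0 : 0 < lam) {F : ℝ → ℝ} (hF : memD F) (n : ℕ) :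
    memD ((Tm μ lam)^[n] F) := by
  induction n with
  | zero => exact hF
  | succ n ih => rw [Function.iterate_succ_apply']; exact ih.T h0

lemma iter_contract (h0 : 0 < lam) (k : ℕ) : ∀ {F G : ℝ → ℝ}, memD F → memD G →
    ∀ {δ : ℝ}, 0 ≤ δ →
    (∀ u ∈ Set.Icc (0:ℝ) 1, |F u - G u| ≤ δ) → ∀ x ∈ Set.Icc (0:ℝ) 1,
    |(Tm μ lam)^[2*k] F x - (Tm μ lam)^[2*k] G x| ≤ (lam * Real.exp (-1))^k * δ := by
  induction k with
  | zero => intro F G hF hG δ hδ h x hx; simpa using h x hx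
  | succ k ih =>
    intro F G hF hG δ hδ h x hx
    have h2 : ∀ u ∈ Set.Icc (0:ℝ) 1,
        |Tm μ lam (Tm μ lam F) u - Tm μ lam (Tm μ lam G) u| ≤ lam * δ * Real.exp (-1) :=
      fun u hu => T2_contract h0 hF hG hδ h hu
    have hF2 : memD (Tm μ lam (Tm μ lam F)) := (hF.T h0).T h0
    have hG2 : memD (Tm μ lam (Tm μ lam G)) := (hG.T h0).T h0
    have key := ih hF2 hG2 (by positivity) h2 x hx
    have e2 : ∀ H : ℝ → ℝ, (Tm μ lam)^[2*(k+1)] H = (Tm μ lam)^[2*k] (Tm μ lam (Tm μ lam H)) := by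
      intro H
      rw [show 2*(k+1) = 2*k + 2 by ring, Function.iterate_add_apply]
      congr 1
    rw [e2 F, e2 G]
    calc |(Tm μ lam)^[2*k] (Tm μ lam (Tm μ lam F)) x - (Tm μ lam)^[2*k] (Tm μ lam (Tm μ lam G)) x|
        ≤ (lam * Real.exp (-1))^k * (lam * δ * Real.exp (-1)) := key
      _ = (lam * Real.exp (-1))^(k+1) * δ := by ring

lemma close_one {F G : ℝ → ℝ} (hF : memD F) (hG : memD G) :
    ∀ u ∈ Set.Icc (0:ℝ) 1, |F u - G u| ≤ 1 := by
  intro u hu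
  have h1 := hF.2 u hu
  have h2 := hG.2 u hu
  rw [abs_le]
  exact ⟨by linarith [h1.1, h2.2], by linarith [h1.2, h2.1]⟩

lemma iter_close (h0 : 0 < lam) {F G : ℝ → ℝ} (hF : memD F) (hG : memD G) (n : ℕ)
    {x : ℝ} (hx : x ∈ Set.Icc (0:ℝ) 1) :
    |(Tm μ lam)^[n] F x - (Tm μ lam)^[n] G x| ≤ (lam * Real.exp (-1))^(n/2) := by
  rcases Nat.mod_two_eq_zero_or_one n with hpar | hpar
  · have h := iter_contract (μ := μ) h0 (n/2) hF hG zero_le_one (close_one hF hG) x hx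
    rw [mul_one] at h
    have e' : (Tm μ lam)^[n] = (Tm μ lam)^[2*(n/2)] := by rw [show 2*(n/2) = n by omega]
    rw [e']
    exact h
  · have h := iter_contract (μ := μ) h0 (n/2) (hF.T (μ := μ) h0) (hG.T (μ := μ) h0) zero_le_one
      (close_one (hF.T (μ := μ) h0) (hG.T (μ := μ) h0)) x hx
    rw [mul_one] at h
    have e' : (Tm μ lam)^[n] = (Tm μ lam)^[2*(n/2) + 1] := by rw [show 2*(n/2) + 1 = n by omega]
    rw [e', Function.iterate_add_apply, Function.iterate_add_apply, Function.iterate_one]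
    exact h

theorem main' (μ : Measure ℝ) [IsProbabilityMeasure μ] (lam : ℝ) (h0 : 0 < lam)
    (he : lam < Real.exp 1) :
    ∃ Fstar : ℝ → ℝ,
      (MonotoneOn Fstar (Set.Icc 0 1) ∧ ∀ x ∈ Set.Icc (0:ℝ) 1, Fstar x ∈ Set.Icc (0:ℝ) 1) ∧
      Set.EqOn (Tm μ lam Fstar) Fstar (Set.Icc 0 1) ∧
      (∀ F : ℝ → ℝ, MonotoneOn F (Set.Icc 0 1) →
        (∀ x ∈ Set.Icc (0:ℝ) 1, F x ∈ Set.Icc (0:ℝ) 1) →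
        Tendsto (fun n => ⨆ x : Set.Icc (0:ℝ) 1, |(Tm μ lam)^[n] F x - Fstar x|) atTop (nhds 0)) ∧
      (∀ G : ℝ → ℝ, MonotoneOn G (Set.Icc 0 1) →
        (∀ x ∈ Set.Icc (0:ℝ) 1, G x ∈ Set.Icc (0:ℝ) 1) →
        Set.EqOn (Tm μ lam G) G (Set.Icc 0 1) → Set.EqOn G Fstar (Set.Icc 0 1)) := by
  set q := lam * Real.exp (-1) with hqdef
  have hq0 : 0 ≤ q := by positivity
  have hq1 : q < 1 := by
    have h1 : Real.exp 1 * Real.exp (-1) = 1 := by rw [← Real.exp_add]; norm_num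
    nlinarith [Real.exp_pos (-1)]
  have htends0 : Tendsto (fun N : ℕ => q^(N/2)) atTop (𝓝 0) := by
    apply (tendsto_pow_atTop_nhds_zero_of_lt_one hq0 hq1).comp
    exact Filter.tendsto_atTop_atTop.mpr fun b =>
      ⟨2*b, fun n hn => (Nat.le_div_iff_mul_le (by norm_num)).mpr (by omega)⟩
  set One : ℝ → ℝ := fun _ => 1 with hOnedef
  have hOne : memD One := ⟨monotoneOn_const, fun x _ => ⟨zero_le_one, le_rfl⟩⟩
  set s : ℕ → ℝ → ℝ := fun n => (Tm μ lam)^[n] One with hsdef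
  have hs : ∀ n, memD (s n) := fun n => iter_memD h0 hOne n
  have hclose2 : ∀ n m, n ≤ m → ∀ x ∈ Set.Icc (0:ℝ) 1, |s m x - s n x| ≤ q^(n/2) := by
    intro n m hnm x hx
    have enm : n + (m - n) = m := by omega
    have e : s m = (Tm μ lam)^[n] ((Tm μ lam)^[m-n] One) := by
      show (Tm μ lam)^[m] One = _
      conv_lhs => rw [← enm]
      rw [Function.iterate_add_apply]
    rw [e]
    exact iter_close h0 (iter_memD h0 hOne (m-n)) hOne n hx
  have hcauchy : ∀ x ∈ Set.Icc (0:ℝ) 1, CauchySeq (fun n => s n x) := by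
    intro x hx
    refine cauchySeq_of_le_tendsto_0 (fun N => q^(N/2)) ?_ htends0
    intro n m N hn hm
    rcases le_total n m with h | h
    · rw [Real.dist_eq, abs_sub_comm]
      exact (hclose2 n m h x hx).trans (pow_le_pow_of_le_one hq0 hq1.le (Nat.div_le_div_right hn))
    · rw [Real.dist_eq]
      exact (hclose2 m n h x hx).trans (pow_le_pow_of_le_one hq0 hq1.le (Nat.div_le_div_right hm))
  set Fstar : ℝ → ℝ := fun x => limUnder atTop (fun n => s n x) with hFdef
  have hlim : ∀ x ∈ Set.Icc (0:ℝ) 1, Tendsto (fun n => s n x) atTop (𝓝 (Fstar x)) :=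
    fun x hx => (hcauchy x hx).tendsto_limUnder
  have hFstar_close : ∀ N, ∀ x ∈ Set.Icc (0:ℝ) 1, |Fstar x - s N x| ≤ q^(N/2) := by
    intro N x hx
    have h1 : Tendsto (fun m => |s m x - s N x|) atTop (𝓝 |Fstar x - s N x|) :=
      ((hlim x hx).sub_const (s N x)).abs
    refine le_of_tendsto h1 ?_
    filter_upwards [eventually_ge_atTop N] with m hm using hclose2 N m hm x hx
  have hFD : memD Fstar := by
    constructor
    · intro a ha b hb hab
      exact le_of_tendsto_of_tendsto' (hlim a ha) (hlim b hb) fun n => (hs n).1 ha hb hab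
    · intro x hx
      exact ⟨ge_of_tendsto' (hlim x hx) fun n => ((hs n).2 x hx).1,
        le_of_tendsto' (hlim x hx) fun n => ((hs n).2 x hx).2⟩
  have hfix : Set.EqOn (Tm μ lam Fstar) Fstar (Set.Icc 0 1) := by
    intro x hx
    have key : ∀ N : ℕ, |Tm μ lam Fstar x - Fstar x| ≤ (lam + 1) * q^(N/2) := by
      intro N
      have h1 : |Tm μ lam Fstar x - Tm μ lam (s N) x| ≤ lam * q^(N/2) :=
        T_lip h0 hFD (hs N) (fun u hu => hFstar_close N u hu) hx
      have e : Tm μ lam (s N) x = s (N+1) x := by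
        show Tm μ lam ((Tm μ lam)^[N] One) x = (Tm μ lam)^[N+1] One x
        rw [Function.iterate_succ_apply']
      have h2 : |s (N+1) x - Fstar x| ≤ q^(N/2) := by
        have h3 := hFstar_close (N+1) x hx
        rw [abs_sub_comm] at h3
        exact h3.trans (pow_le_pow_of_le_one hq0 hq1.le (Nat.div_le_div_right (by omega)))
      calc |Tm μ lam Fstar x - Fstar x|
          ≤ |Tm μ lam Fstar x - s (N+1) x| + |s (N+1) x - Fstar x| := abs_sub_le _ _ _
        _ ≤ lam * q^(N/2) + q^(N/2) := add_le_add (by rw [← e]; exact h1) h2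
        _ = (lam + 1) * q^(N/2) := by ring
    have hlim2 : Tendsto (fun N : ℕ => (lam + 1) * q^(N/2)) atTop (𝓝 0) := by
      have h4 := htends0.const_mul (lam + 1)
      simpa using h4
    have h5 : |Tm μ lam Fstar x - Fstar x| ≤ 0 := ge_of_tendsto hlim2 (Eventually.of_forall key)
    have h6 : |Tm μ lam Fstar x - Fstar x| = 0 := le_antisymm h5 (abs_nonneg _)
    rw [abs_eq_zero, sub_eq_zero] at h6
    exact h6
  have hiter_fix : ∀ (H : ℝ → ℝ), Set.EqOn (Tm μ lam H) H (Set.Icc 0 1) →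
      ∀ n, Set.EqOn ((Tm μ lam)^[n] H) H (Set.Icc 0 1) := by
    intro H hfixH n
    induction n with
    | zero => intro x hx; rfl
    | succ n ih =>
      intro x hx
      rw [Function.iterate_succ_apply']
      have h7 := Tm_congr (μ := μ) (lam := lam) ih hx
      rw [h7]
      exact hfixH hx
  have hconv : ∀ F, memD F →
      Tendsto (fun n => ⨆ x : Set.Icc (0:ℝ) 1, |(Tm μ lam)^[n] F x - Fstar x|) atTop (𝓝 0) := by
    intro F hF
    haveI : Nonempty (Set.Icc (0:ℝ) 1) := ⟨⟨0, le_rfl, zero_le_one⟩⟩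
    have hb : ∀ (n : ℕ) (x : Set.Icc (0:ℝ) 1), |(Tm μ lam)^[n] F x - Fstar (x:ℝ)| ≤ q^(n/2) := by
      intro n x
      calc |(Tm μ lam)^[n] F x - Fstar (x:ℝ)|
          = |(Tm μ lam)^[n] F x - (Tm μ lam)^[n] Fstar x| := by
            rw [hiter_fix Fstar hfix n x.2]
        _ ≤ q^(n/2) := iter_close h0 hF hFD n x.2
    refine squeeze_zero (g := fun n => q^(n/2)) ?_ ?_ htends0
    · intro n
      have hbdd : BddAbove (Set.range fun x : Set.Icc (0:ℝ) 1 =>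
          |(Tm μ lam)^[n] F x - Fstar (x:ℝ)|) :=
        ⟨q^(n/2), by rintro _ ⟨x, rfl⟩; exact hb n x⟩
      exact le_trans (abs_nonneg _) (le_ciSup hbdd ⟨0, le_rfl, zero_le_one⟩)
    · intro n
      exact ciSup_le fun x => hb n x
  have huniq : ∀ G, memD G → Set.EqOn (Tm μ lam G) G (Set.Icc 0 1) →
      Set.EqOn G Fstar (Set.Icc 0 1) := by
    intro G hG hGfix x hx
    have key : ∀ n : ℕ, |G x - Fstar x| ≤ q^(n/2) := by
      intro n
      calc |G x - Fstar x| = |(Tm μ lam)^[n] G x - (Tm μ lam)^[n] Fstar x| := by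
            rw [hiter_fix G hGfix n hx, hiter_fix Fstar hfix n hx]
        _ ≤ q^(n/2) := iter_close h0 hG hFD n hx
    have h5 : |G x - Fstar x| ≤ 0 := ge_of_tendsto htends0 (Eventually.of_forall key)
    have h6 : |G x - Fstar x| = 0 := le_antisymm h5 (abs_nonneg _)
    rw [abs_eq_zero, sub_eq_zero] at h6
    exact h6
  exact ⟨Fstar, ⟨hFD.1, hFD.2⟩, hfix, fun F h1 h2 => hconv F ⟨h1, h2⟩,
    fun G h1 h2 h3 => huniq G ⟨h1, h2⟩ h3⟩

end main

theorem stmt_13 (μ : Measure ℝ) [IsProbabilityMeasure μ]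
    (hμs : μ (Set.Icc (0:ℝ) 1)ᶜ = 0)
    (lam : ℝ) (h0 : 0 < lam) (he : lam < Real.exp 1) :
    let T : (ℝ → ℝ) → (ℝ → ℝ) :=
      fun F x => Real.exp (-(lam * ∫ z in Set.Icc x 1, F (z - x) ∂μ));
    ∃ Fstar : ℝ → ℝ,
      (MonotoneOn Fstar (Set.Icc 0 1) ∧ ∀ x ∈ Set.Icc (0:ℝ) 1, Fstar x ∈ Set.Icc (0:ℝ) 1) ∧
      Set.EqOn (T Fstar) Fstar (Set.Icc 0 1) ∧
      (∀ F : ℝ → ℝ, MonotoneOn F (Set.Icc 0 1) →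
        (∀ x ∈ Set.Icc (0:ℝ) 1, F x ∈ Set.Icc (0:ℝ) 1) →
        Tendsto (fun n => ⨆ x : Set.Icc (0:ℝ) 1, |T^[n] F x - Fstar x|) atTop (nhds 0)) ∧
      (∀ G : ℝ → ℝ, MonotoneOn G (Set.Icc 0 1) →
        (∀ x ∈ Set.Icc (0:ℝ) 1, G x ∈ Set.Icc (0:ℝ) 1) →
        Set.EqOn (T G) G (Set.Icc 0 1) → Set.EqOn G Fstar (Set.Icc 0 1)) := by
  intro T
  exact main' μ lam h0 he
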